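/- Necessary condition for solvability: if u ∈ H^1(0,b) ∩ C[0,b] solves (ABC_0 D^α u)(t) = λ u(t) + f(t) for t > 0 with u(0) = u_0, where 0 < α < 1, λ ∈ ℝ, and f is continuous, then λ u_0 + f(0) = 0. -/

import Mathlib

open MeasureTheory Real Set

/-- One-parameter Mittag-Leffler function `E_α(z) = Σ z^k / Γ(αk+1)`. -/
noncomputable def mlE (α z : ℝ) : ℝ := ∑' k : ℕ, z ^ k / Real.Gamma (α * k + 1)

/-- Left ABC (Caputo with Mittag-Leffler kernel) fractional derivative of order `α`
with base point `a` and normalization constant `Bα`. -/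
noncomputable def abc (Bα α a : ℝ) (f : ℝ → ℝ) (t : ℝ) : ℝ :=
  (Bα / (1 - α)) * ∫ s in a..t, mlE α (-(α / (1 - α)) * (t - s) ^ α) * deriv f s

/-- Left ABR (Riemann–Liouville with Mittag-Leffler kernel) fractional derivative,
base point `0`. -/
noncomputable def abr (Bα α : ℝ) (f : ℝ → ℝ) (t : ℝ) : ℝ :=
  (Bα / (1 - α)) *
    deriv (fun τ => ∫ s in (0:ℝ)..τ, mlE α (-(α / (1 - α)) * (τ - s) ^ α) * f s) t

/-- The spectral kernel `K_α` in the complete-monotonicity representation of `E_α`. -/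
noncomputable def Kker (α r : ℝ) : ℝ :=
  (1 / Real.pi) * (r ^ (α - 1) * Real.sin (α * Real.pi)) /
    (r ^ (2 * α) + 2 * r ^ α * Real.cos (α * Real.pi) + 1)

/-- Laplace convolution on `[0, t]`. -/
noncomputable def lconv (f g : ℝ → ℝ) (t : ℝ) : ℝ := ∫ s in (0:ℝ)..t, f (t - s) * g s

/-- Membership in `H^1(a,b)` (together with the continuity used in the paper):
differentiable on `(a,b)` with square-integrable derivative, continuous on `[a,b]`. -/
def MemH1 (a b : ℝ) (f : ℝ → ℝ) : Prop :=
  ContinuousOn f (Set.Icc a b) ∧ DifferentiableOn ℝ f (Set.Ioo a b) ∧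
    MeasureTheory.IntegrableOn (fun s => (deriv f s) ^ 2) (Set.Ioo a b)

open Filter in
lemma summable_ml (α x : ℝ) (hα1 : 0 < α) (hx : 0 ≤ x) :
    Summable (fun k : ℕ => x ^ k / Real.Gamma (α * k + 1)) := by
  rcases eq_or_lt_of_le hx with h0 | hx
  · apply summable_of_ne_finset_zero (s := {0})
    intro k hk
    simp only [Finset.mem_singleton] at hk
    simp [← h0, zero_pow hk]
  set y : ℝ := (2 * x + 1) ^ (α⁻¹ : ℝ) with hy
  have h2x : (1 : ℝ) < 2 * x + 1 := by linarith
  have hy1 : 1 ≤ y := Real.one_le_rpow h2x.le (by positivity)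
  have hk : Tendsto (fun k : ℕ => α * (k : ℝ)) atTop atTop :=
    (tendsto_natCast_atTop_atTop).const_mul_atTop hα1
  have hfl : Tendsto (fun k : ℕ => ⌊α * (k : ℝ)⌋₊) atTop atTop :=
    tendsto_nat_floor_atTop.comp hk
  have hfact : ∀ᶠ n : ℕ in atTop, y ^ n ≤ (Nat.factorial n : ℝ) := by
    have h := (Real.summable_pow_div_factorial y).tendsto_atTop_zero
    filter_upwards [h.eventually_lt_const one_pos] with n hn
    have hpos : (0 : ℝ) < Nat.factorial n := by positivity
    nlinarith [div_lt_one hpos |>.mp hn]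
  have hev : ∀ᶠ k : ℕ in atTop,
      x ^ k / Real.Gamma (α * k + 1) ≤ y * (x / (2 * x + 1)) ^ k := by
    filter_upwards [hfl.eventually_ge_atTop 1, hfl.eventually hfact] with k h1k h2k
    set n := ⌊α * (k : ℝ)⌋₊ with hn
    have hαk : (0 : ℝ) ≤ α * k := by positivity
    have hn_le : (n : ℝ) ≤ α * k := Nat.floor_le hαk
    have hn_gt : α * (k : ℝ) < n + 1 := Nat.lt_floor_add_one _
    have hn1 : (1 : ℝ) ≤ n := by exact_mod_cast h1k
    have hg1 : (Nat.factorial n : ℝ) ≤ Real.Gamma (α * k + 1) := by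
      rw [← Real.Gamma_nat_eq_factorial]
      exact Real.Gamma_strictMonoOn_Ici.monotoneOn (by simp [mem_Ici]; linarith)
        (by simp [mem_Ici]; linarith) (by linarith)
    have hyn : y ^ ((α * k - 1 : ℝ)) ≤ (Nat.factorial n : ℝ) := by
      refine le_trans ?_ h2k
      rw [← Real.rpow_natCast y n]
      exact Real.rpow_le_rpow_of_exponent_le hy1 (by linarith)
    have hyval : y ^ ((α * k - 1 : ℝ)) = (2 * x + 1) ^ k / y := by
      rw [hy, ← Real.rpow_natCast (2 * x + 1) k, ← Real.rpow_mul (by linarith),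
        ← Real.rpow_sub (by linarith)]
      congr 1
      field_simp
    have hden : (0 : ℝ) < (2 * x + 1) ^ k / y := by positivity
    have hΓ : (0 : ℝ) < Real.Gamma (α * k + 1) := Real.Gamma_pos_of_pos (by positivity)
    have key : x ^ k / Real.Gamma (α * k + 1) ≤ x ^ k / ((2 * x + 1) ^ k / y) := by
      gcongr
      · rw [← hyval]; exact hyn.trans hg1
    refine key.trans (le_of_eq ?_)
    rw [div_pow]
    field_simp
  have hgeo : Summable (fun k : ℕ => (x / (2 * x + 1)) ^ k) :=
    summable_geometric_of_lt_one (by positivity) (by rw [div_lt_one (by linarith)]; linarith)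
  refine summable_of_isBigO_nat hgeo (Asymptotics.isBigO_iff.mpr ⟨y, ?_⟩)
  filter_upwards [hev] with k hk2
  have hΓ : (0 : ℝ) < Real.Gamma (α * k + 1) := Real.Gamma_pos_of_pos (by positivity)
  have h1 : (0:ℝ) ≤ x ^ k / Real.Gamma (α * k + 1) := by positivity
  have h2 : (0:ℝ) ≤ (x / (2 * x + 1)) ^ k := by positivity
  rw [Real.norm_eq_abs, Real.norm_eq_abs, abs_of_nonneg h1, abs_of_nonneg h2]
  calc x ^ k / Real.Gamma (α * k + 1) ≤ y * (x / (2 * x + 1)) ^ k := hk2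
    _ = y * (x / (2 * x + 1)) ^ k := rfl

lemma abs_mlE_le {α c z : ℝ} (hα1 : 0 < α) (hz : |z| ≤ c) :
    |mlE α z| ≤ ∑' k : ℕ, c ^ k / Real.Gamma (α * k + 1) := by
  have hc : 0 ≤ c := le_trans (abs_nonneg z) hz
  have hS := summable_ml α c hα1 hc
  have hpt : ∀ k : ℕ, |z ^ k / Real.Gamma (α * k + 1)| ≤ c ^ k / Real.Gamma (α * k + 1) := by
    intro k
    have hΓ : 0 < Real.Gamma (α * k + 1) := Real.Gamma_pos_of_pos (by positivity)
    rw [abs_div, abs_of_pos hΓ, abs_pow]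
    gcongr
  have hS2 : Summable (fun k : ℕ => |z ^ k / Real.Gamma (α * k + 1)|) :=
    Summable.of_nonneg_of_le (fun _ => abs_nonneg _) hpt hS
  calc |mlE α z| ≤ ∑' k : ℕ, |z ^ k / Real.Gamma (α * k + 1)| := by
        simpa only [Real.norm_eq_abs, mlE] using
          norm_tsum_le_tsum_norm (f := fun k : ℕ => z ^ k / Real.Gamma (α * k + 1))
            (by simpa only [Real.norm_eq_abs] using hS2)
    _ ≤ ∑' k : ℕ, c ^ k / Real.Gamma (α * k + 1) := Summable.tsum_le_tsum hpt hS2 hS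

/-- necessary condition for solvability of the linear equation. -/
theorem necessary_condition (b α Bα lam u₀ : ℝ) (hb : 0 < b) (hα1 : 0 < α) (hα2 : α < 1)
    (hB : 0 < Bα) (u f : ℝ → ℝ) (hu : MemH1 0 b u)
    (hf : ContinuousOn f (Set.Icc 0 b))
    (heq : ∀ t ∈ Set.Ioc (0:ℝ) b, abc Bα α 0 u t = lam * u t + f t)
    (hu0 : u 0 = u₀) :
    lam * u₀ + f 0 = 0 := by
  obtain ⟨hucont, hudiff, huL2⟩ := hu
  have h1α : 0 < 1 - α := by linarith
  set c₀ : ℝ := Bα / (1 - α) with hc₀def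
  have hc₀ : 0 < c₀ := div_pos hB h1α
  set c : ℝ := (α / (1 - α)) * b ^ (α : ℝ) with hcdef
  have hcnn : 0 ≤ c := by positivity
  set M : ℝ := ∑' k : ℕ, c ^ k / Real.Gamma (α * k + 1) with hMdef
  have hM0 : 0 ≤ M := tsum_nonneg fun k => by positivity
  -- integrability of |u'| on (0,b)
  have hmeas : Measurable (fun s => |deriv u s|) := (measurable_deriv u).abs
  have hInt : IntegrableOn (fun s => |deriv u s|) (Ioo 0 b) := by
    have hbig : IntegrableOn (fun s => 1 + (deriv u s) ^ 2) (Ioo 0 b) :=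
      ((integrableOn_const_iff).mpr (Or.inr measure_Ioo_lt_top)).add huL2
    refine hbig.mono' hmeas.aestronglyMeasurable ?_
    filter_upwards with s
    rw [Real.norm_eq_abs, abs_abs]
    nlinarith [sq_nonneg (|deriv u s| - 1), sq_abs (deriv u s)]
  set F : ℝ → ℝ := fun t => ∫ s in (0:ℝ)..t, |deriv u s| with hFdef
  have hIntIcc : IntegrableOn (fun s => |deriv u s|) (Icc 0 b) :=
    (integrableOn_Icc_iff_integrableOn_Ioo).mpr hInt
  have hFcont : ContinuousOn F (Icc 0 b) := by
    have := intervalIntegral.continuousOn_primitive_interval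
      (f := fun s => |deriv u s|) (μ := volume) (a := (0:ℝ)) (b := b)
      (by rwa [uIcc_of_le hb.le])
    rwa [uIcc_of_le hb.le] at this
  have h0mem : (0:ℝ) ∈ Icc (0:ℝ) b := left_mem_Icc.mpr hb.le
  have hl : Filter.NeBot (nhdsWithin (0:ℝ) (Ioo 0 b)) := by
    rw [← mem_closure_iff_nhdsWithin_neBot, closure_Ioo hb.ne]
    exact h0mem
  have hF0 : Filter.Tendsto F (nhdsWithin (0:ℝ) (Ioo 0 b)) (nhds 0) := by
    have h := ((hFcont 0 h0mem).mono Ioo_subset_Icc_self).tendsto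
    have h00 : F 0 = 0 := intervalIntegral.integral_same
    rwa [h00] at h
  -- The key bound
  have hbound : ∀ t ∈ Ioo (0:ℝ) b, ‖abc Bα α 0 u t‖ ≤ c₀ * M * F t := by
    intro t ht
    have htIoc : Ioc (0:ℝ) t ⊆ Ioo (0:ℝ) b := fun s hs => ⟨hs.1, lt_of_le_of_lt hs.2 ht.2⟩
    have hIg : IntervalIntegrable (fun s => M * |deriv u s|) volume 0 t := by
      rw [intervalIntegrable_iff_integrableOn_Ioc_of_le ht.1.le]
      exact (hInt.mono_set htIoc).const_mul M
    have hker : ∀ s ∈ Set.uIoc (0:ℝ) t,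
        ‖mlE α (-(α / (1 - α)) * (t - s) ^ (α:ℝ)) * deriv u s‖ ≤ M * |deriv u s| := by
      intro s hs
      rw [Set.uIoc_of_le ht.1.le] at hs
      have hts : 0 ≤ t - s := by linarith [hs.2]
      have htsb : t - s ≤ b := by linarith [hs.1, ht.2]
      have habs : |(-(α / (1 - α)) * (t - s) ^ (α:ℝ))| ≤ c := by
        rw [abs_mul, abs_neg, abs_of_nonneg (by positivity : (0:ℝ) ≤ α / (1 - α)),
          abs_of_nonneg (Real.rpow_nonneg hts α)]
        exact mul_le_mul_of_nonneg_left (Real.rpow_le_rpow hts htsb hα1.le) (by positivity)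
      have h1 := abs_mlE_le hα1 habs
      rw [Real.norm_eq_abs, abs_mul]
      exact mul_le_mul_of_nonneg_right h1 (abs_nonneg _)
    have hle := intervalIntegral.norm_integral_le_abs_of_norm_le
      (μ := volume) (a := (0:ℝ)) (b := t)
      (f := fun s => mlE α (-(α / (1 - α)) * (t - s) ^ (α:ℝ)) * deriv u s)
      ((ae_restrict_mem measurableSet_uIoc).mono hker) hIg
    have hFt : 0 ≤ F t :=
      intervalIntegral.integral_nonneg ht.1.le (fun s _ => abs_nonneg _)
    have hval : ∫ s in (0:ℝ)..t, M * |deriv u s| = M * F t :=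
      intervalIntegral.integral_const_mul M _
    rw [hval, abs_of_nonneg (by positivity)] at hle
    rw [abc, Real.norm_eq_abs, abs_mul, abs_of_pos hc₀]
    calc c₀ * |∫ s in (0:ℝ)..t, mlE α (-(α / (1 - α)) * (t - s) ^ (α:ℝ)) * deriv u s|
        ≤ c₀ * (M * F t) := by
          refine mul_le_mul_of_nonneg_left ?_ hc₀.le
          simpa [Real.norm_eq_abs] using hle
      _ = c₀ * M * F t := by ring
  have h2 : Filter.Tendsto (abc Bα α 0 u) (nhdsWithin (0:ℝ) (Ioo 0 b)) (nhds 0) := by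
    refine squeeze_zero_norm' (a := fun t => c₀ * M * F t) ?_ ?_
    · filter_upwards [self_mem_nhdsWithin] with t ht using hbound t ht
    · have h := hF0.const_mul (c₀ * M)
      simpa using h
  have h1 : Filter.Tendsto (fun t => lam * u t + f t) (nhdsWithin (0:ℝ) (Ioo 0 b))
      (nhds (lam * u₀ + f 0)) := by
    have hu' := ((hucont 0 h0mem).mono Ioo_subset_Icc_self).tendsto
    have hf' := ((hf 0 h0mem).mono Ioo_subset_Icc_self).tendsto
    rw [hu0] at hu'
    exact (hu'.const_mul lam).add hf'
  have h2' : Filter.Tendsto (fun t => lam * u t + f t) (nhdsWithin (0:ℝ) (Ioo 0 b))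
      (nhds 0) := by
    refine h2.congr' ?_
    filter_upwards [self_mem_nhdsWithin] with t ht using heq t ⟨ht.1, ht.2.le⟩
  exact tendsto_nhds_unique h1 h2'
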